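/- arXiv:2011.05875 — 3 statements merged into one kernel-verified Lean document; each statement's English description precedes it below -/
import Mathlib

section
/- A pair of sequences ((Aₙ),(Ψₙ)) of bounded linear operators from H to H₀ is an orthonormal factorable weak operator-valued frame in B(H,H₀) if and only if there exist bounded linear operators U, V : H → ℓ²(ℕ,H₀) such that Aₙ = Lₙ* U and Ψₙ = Lₙ* V for all n ∈ ℕ, V*U = I_H, and U V* = I on ℓ²(ℕ,H₀). -/
noncomputable section

open ContinuousLinearMap Filter

variable {H H₀ : Type*} [NormedAddCommGroup H] [InnerProductSpace ℂ H] [CompleteSpace H]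
  [NormedAddCommGroup H₀] [InnerProductSpace ℂ H₀] [CompleteSpace H₀]

/-- `ℓ²(I, H₀)`: square-summable `H₀`-valued families indexed by `I`. -/
abbrev l2 (I : Type*) (H₀ : Type*) [NormedAddCommGroup H₀] : Type _ :=
  lp (fun _ : I => H₀) 2

/-- The isometry `Lᵢ : H₀ → ℓ²(I,H₀)` sending `h` to the family equal to `h` at index `i`
and `0` elsewhere. -/
def Lop {I : Type*} [DecidableEq I] (i : I) : H₀ →L[ℂ] l2 I H₀ :=
  LinearMap.mkContinuous
    { toFun := fun h => lp.single 2 i h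
      map_add' := by
        intro a b
        apply lp.ext
        funext j
        by_cases hj : j = i
        · subst hj; simp [lp.single_apply_self]
        · simp [lp.single_apply_ne _ _ _ hj, lp.coeFn_add]
      map_smul' := by
        intro c a
        simp [lp.single_smul] }
    1
    (by
      intro h
      simpa using (lp.norm_single (p := 2) (by norm_num) (fun _ : I => h) i).le)

/-- Convergence of the sequence of partial sums `∑_{n < m} f n` to `x` as `m → ∞`. -/
def SeqSum {E : Type*} [AddCommMonoid E] [TopologicalSpace E] (f : ℕ → E) (x : E) : Prop :=
  Tendsto (fun m => ∑ n ∈ Finset.range m, f n) atTop (nhds x)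

private lemma Lop_apply {I : Type*} [DecidableEq I] (i : I) (h : H₀) :
    (Lop i h : l2 I H₀) = lp.single 2 i h := rfl

open scoped InnerProductSpace in
private lemma adj_Lop_apply (n : ℕ) (x : l2 ℕ H₀) : adjoint (Lop n) x = x n := by
  refine ext_inner_right ℂ fun h => ?_
  rw [adjoint_inner_left, Lop_apply, lp.inner_single_right]

private lemma hasSum_Lop (x : l2 ℕ H₀) : HasSum (fun n => (Lop n (x n) : l2 ℕ H₀)) x := by
  simpa [Lop_apply] using lp.hasSum_single (E := fun _ : ℕ => H₀) ENNReal.ofNat_ne_top x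

private lemma adj_Lop_Lop (n k : ℕ) (v : H₀) :
    adjoint (Lop n) (Lop k v : l2 ℕ H₀) = if n = k then v else 0 := by
  rw [adj_Lop_apply, Lop_apply]
  by_cases h : n = k
  · subst h; rw [lp.single_apply_self, if_pos rfl]
  · rw [lp.single_apply_ne _ _ _ h, if_neg h]

set_option maxHeartbeats 1000000 in
private lemma key (B : ℕ → H →L[ℂ] H₀) (θ : H →L[ℂ] l2 ℕ H₀)
    (hB : ∀ h : H, SeqSum (fun n => Lop n (B n h)) (θ h)) (n : ℕ) :
    B n = adjoint (Lop n) ∘L θ := by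
  ext h
  have hBh : Tendsto (fun m => ∑ k ∈ Finset.range m, (Lop k (B k h) : l2 ℕ H₀)) atTop
      (nhds (θ h)) := hB h
  have h1 := ((adjoint (Lop n)).continuous.tendsto (θ h)).comp hBh
  have h3 : Tendsto (fun _ : ℕ => B n h) atTop (nhds (adjoint (Lop n) (θ h))) := by
    refine h1.congr' ?_
    filter_upwards [eventually_gt_atTop n] with m hm
    show adjoint (Lop n) (∑ k ∈ Finset.range m, (Lop k (B k h) : l2 ℕ H₀)) = B n h
    rw [map_sum]
    simp only [adj_Lop_Lop]
    rw [Finset.sum_ite_eq]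
    simp [Finset.mem_range.mpr hm]
  exact (tendsto_nhds_unique h3 tendsto_const_nhds).symm

set_option maxHeartbeats 1000000 in
/-- `((Aₙ),(Ψₙ))` is an orthonormal factorable weak OVF iff `Aₙ = Lₙ* U`,
`Ψₙ = Lₙ* V` with `V*U = I_H` and `U V* = I` on `ℓ²(ℕ,H₀)`. -/
theorem stmt8 (A Ψ : ℕ → H →L[ℂ] H₀) :
    (∃ (θA θΨ : H →L[ℂ] l2 ℕ H₀) (S : H →L[ℂ] H),
        (∀ h : H, SeqSum (fun n => Lop n (A n h)) (θA h)) ∧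
        (∀ h : H, SeqSum (fun n => Lop n (Ψ n h)) (θΨ h)) ∧
        (∀ h : H, SeqSum (fun n => adjoint (Ψ n) (A n h)) (S h)) ∧
        S = 1 ∧
        θA ∘L adjoint θΨ = 1) ↔
    (∃ U V : H →L[ℂ] l2 ℕ H₀,
        (∀ n : ℕ, A n = adjoint (Lop n) ∘L U) ∧
        (∀ n : ℕ, Ψ n = adjoint (Lop n) ∘L V) ∧
        adjoint V ∘L U = 1 ∧
        U ∘L adjoint V = 1) := by
  constructor
  · rintro ⟨θA, θΨ, S, hA, hΨ, hS, rfl, hUV⟩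
    refine ⟨θA, θΨ, key A θA hA, key Ψ θΨ hΨ, ?_, hUV⟩
    ext h
    rw [comp_apply, ContinuousLinearMap.one_apply]
    have hAh : Tendsto (fun m => ∑ k ∈ Finset.range m, (Lop k (A k h) : l2 ℕ H₀)) atTop
        (nhds (θA h)) := hA h
    have h1 := ((adjoint θΨ).continuous.tendsto (θA h)).comp hAh
    have h3 : Tendsto (fun m => ∑ n ∈ Finset.range m, adjoint (Ψ n) (A n h)) atTop
        (nhds (adjoint θΨ (θA h))) := by
      refine h1.congr fun m => ?_
      show adjoint θΨ (∑ k ∈ Finset.range m, (Lop k (A k h) : l2 ℕ H₀)) = _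
      rw [map_sum]
      refine Finset.sum_congr rfl fun k _ => ?_
      rw [key Ψ θΨ hΨ k, adjoint_comp, adjoint_adjoint, comp_apply]
    have hSh : Tendsto (fun m => ∑ n ∈ Finset.range m, adjoint (Ψ n) (A n h)) atTop
        (nhds h) := by simpa [SeqSum] using hS h
    exact tendsto_nhds_unique h3 hSh
  · rintro ⟨U, V, hAU, hΨV, hVU, hUV⟩
    have hAx : ∀ (n : ℕ) (h : H), A n h = (U h) n := by
      intro n h; rw [hAU n, comp_apply, adj_Lop_apply]
    have hΨx : ∀ (n : ℕ) (h : H), Ψ n h = (V h) n := by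
      intro n h; rw [hΨV n, comp_apply, adj_Lop_apply]
    have hrw : ∀ h : H, adjoint V (U h) = h := by
      intro h
      have := congrArg (fun T : H →L[ℂ] H => T h) hVU
      simpa using this
    refine ⟨U, V, 1, ?_, ?_, ?_, rfl, hUV⟩
    · intro h
      refine ((hasSum_Lop (U h)).tendsto_sum_nat).congr fun m => ?_
      exact Finset.sum_congr rfl fun k _ => by show _ = Lop k (A k h); rw [hAx k h]
    · intro h
      refine ((hasSum_Lop (V h)).tendsto_sum_nat).congr fun m => ?_
      exact Finset.sum_congr rfl fun k _ => by show _ = Lop k (Ψ k h); rw [hΨx k h]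
    · intro h
      have h1 := ((adjoint V).continuous.tendsto (U h)).comp (hasSum_Lop (U h)).tendsto_sum_nat
      have h3 : Tendsto (fun m => ∑ n ∈ Finset.range m, adjoint (Ψ n) (A n h)) atTop
          (nhds (adjoint V (U h))) := by
        refine h1.congr fun m => ?_
        show adjoint V (∑ k ∈ Finset.range m, (Lop k ((U h) k) : l2 ℕ H₀)) = _
        rw [map_sum]
        refine Finset.sum_congr rfl fun k _ => ?_
        rw [hΨV k, adjoint_comp, adjoint_adjoint, comp_apply, hAx k h]
      rw [hrw h] at h3
      show Tendsto _ atTop (nhds ((1 : H →L[ℂ] H) h))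
      rw [ContinuousLinearMap.one_apply]
      exact h3
end
end

section
/- Let ((Aₙ),(Ψₙ)) and ((Bₙ),(Φₙ)) be Parseval weak operator-valued frames in B(H,H₀) which are orthogonal to each other. If C, D, E, F are bounded operators on H satisfying C*E + D*F = I_H, then the pair ((Aₙ C + Bₙ D), (Ψₙ E + Φₙ F)) is a Parseval weak OVF in B(H,H₀). In particular, if scalars c, d, e, f satisfy c̄ e + d̄ f = 1, then ((c Aₙ + d Bₙ), (e Ψₙ + f Φₙ)) is a Parseval weak OVF. -/
noncomputable section

open ContinuousLinearMap Filter

variable {H H₀ : Type*} [NormedAddCommGroup H] [InnerProductSpace ℂ H] [CompleteSpace H]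
  [NormedAddCommGroup H₀] [InnerProductSpace ℂ H₀] [CompleteSpace H₀]

lemma adjoint_one' : ContinuousLinearMap.adjoint (1 : H →L[ℂ] H) = 1 := by
  rw [← ContinuousLinearMap.star_eq_adjoint, star_one]

lemma seqSum_map {E₁ E₂ : Type*} [NormedAddCommGroup E₁] [NormedAddCommGroup E₂]
    [NormedSpace ℂ E₁] [NormedSpace ℂ E₂] {f : ℕ → E₁} {x : E₁}
    (T : E₁ →L[ℂ] E₂) (h : SeqSum f x) : SeqSum (fun n => T (f n)) (T x) := by
  have := (T.continuous.tendsto x).comp h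
  simpa [SeqSum, Function.comp_def, map_sum] using this

lemma seqSum_add {E₁ : Type*} [NormedAddCommGroup E₁] {f g : ℕ → E₁} {x y : E₁}
    (hf : SeqSum f x) (hg : SeqSum g y) : SeqSum (fun n => f n + g n) (x + y) := by
  simpa [SeqSum, Finset.sum_add_distrib] using hf.add hg

/-- Interpolation of two orthogonal Parseval weak OVFs yields a Parseval weak
OVF, both for operator coefficients with `C*E + D*F = I` and for scalar coefficients with
`c̄e + d̄f = 1`. -/
theorem stmt12
    (A Ψ B Φ : ℕ → H →L[ℂ] H₀)
    (hA : ∀ h : H, SeqSum (fun n => adjoint (Ψ n) (A n h)) h)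
    (hB : ∀ h : H, SeqSum (fun n => adjoint (Φ n) (B n h)) h)
    (hortho1 : ∀ h : H, SeqSum (fun n => adjoint (Ψ n) (B n h)) 0)
    (hortho2 : ∀ h : H, SeqSum (fun n => adjoint (Φ n) (A n h)) 0) :
    (∀ C D E F : H →L[ℂ] H, adjoint C ∘L E + adjoint D ∘L F = 1 →
      ∀ h : H,
        SeqSum (fun n => adjoint (Ψ n ∘L E + Φ n ∘L F) ((A n ∘L C + B n ∘L D) h)) h) ∧
    (∀ c d e f : ℂ, starRingEnd ℂ c * e + starRingEnd ℂ d * f = 1 →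
      ∀ h : H,
        SeqSum (fun n => adjoint (e • Ψ n + f • Φ n) ((c • A n + d • B n) h)) h) := by
  have main : ∀ C D E F : H →L[ℂ] H, adjoint C ∘L E + adjoint D ∘L F = 1 →
      ∀ h : H,
        SeqSum (fun n => adjoint (Ψ n ∘L E + Φ n ∘L F) ((A n ∘L C + B n ∘L D) h)) h := by
    intro C D E F hCDEF h
    have h1 := seqSum_map (adjoint E) (hA (C h))
    have h2 := seqSum_map (adjoint E) (hortho1 (D h))
    have h3 := seqSum_map (adjoint F) (hortho2 (C h))
    have h4 := seqSum_map (adjoint F) (hB (D h))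
    have hsum := seqSum_add (seqSum_add h1 h2) (seqSum_add h3 h4)
    have hkey : (adjoint E (C h) + adjoint E 0) + (adjoint F 0 + adjoint F (D h)) = h := by
      have := congrArg (fun T : H →L[ℂ] H => adjoint T h) hCDEF
      simpa [adjoint_comp, adjoint_adjoint, add_apply, comp_apply, adjoint_one'] using this
    rw [hkey] at hsum
    have hfun : (fun n => adjoint (Ψ n ∘L E + Φ n ∘L F) ((A n ∘L C + B n ∘L D) h)) =
        fun n => (adjoint E (adjoint (Ψ n) (A n (C h))) + adjoint E (adjoint (Ψ n) (B n (D h))))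
          + (adjoint F (adjoint (Φ n) (A n (C h))) + adjoint F (adjoint (Φ n) (B n (D h)))) := by
      funext n
      have : adjoint (Ψ n ∘L E + Φ n ∘L F) = adjoint E ∘L adjoint (Ψ n)
          + adjoint F ∘L adjoint (Φ n) := by
        rw [map_add, adjoint_comp, adjoint_comp]
      simp [this, add_apply, comp_apply, map_add]
      abel
    rw [hfun]
    exact hsum
  refine ⟨main, ?_⟩
  intro c d e f hcdef h
  set C : H →L[ℂ] H := c • 1 with hC
  set D : H →L[ℂ] H := d • 1 with hD
  set E : H →L[ℂ] H := e • 1 with hE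
  set F : H →L[ℂ] H := f • 1 with hF
  have hop : adjoint C ∘L E + adjoint D ∘L F = 1 := by
    ext x
    simp only [hC, hD, hE, hF, ← star_eq_adjoint, star_smul, star_one, add_apply,
      comp_apply, smul_apply, one_apply, smul_smul]
    simp only [ContinuousLinearMap.smul_apply, ContinuousLinearMap.one_apply, smul_smul]
    rw [← add_smul]
    have h1 : star c * e + star d * f = 1 := by
      rw [← hcdef]; simp [RCLike.star_def]
    rw [h1, one_smul]
  have := main C D E F hop h
  have heq : (fun n => adjoint (Ψ n ∘L E + Φ n ∘L F)
      ((A n ∘L C + B n ∘L D) h)) =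
      fun n => adjoint (e • Ψ n + f • Φ n) ((c • A n + d • B n) h) := by
    funext n
    congr 1
    · congr 1 <;> ext x <;>
        simp [hE, hF, comp_apply, smul_apply, one_apply, map_smul]
    · simp [hC, hD, add_apply, comp_apply, smul_apply, one_apply, map_smul]
  rwa [heq] at this
end
end

section
/- Let ((Aₙ),(Ψₙ)) and ((Bₙ),(Φₙ)) be factorable weak operator-valued frames in B(H,H₀). The following are equivalent: (i) there exist bounded invertible operators R_{A,B}, R_{Ψ,Φ} on H with Bₙ = Aₙ R_{A,B} and Φₙ = Ψₙ R_{Ψ,Φ} for all n ∈ ℕ; (ii) there exist bounded invertible operators R_{A,B}, R_{Ψ,Φ} on H with θ_B = θ_A R_{A,B} and θ_Φ = θ_Ψ R_{Ψ,Φ}; (iii) P_{B,Φ} = P_{A,Ψ}, where P_{A,Ψ} := θ_A S_{A,Ψ}⁻¹ θ_Ψ* and P_{B,Φ} := θ_B S_{B,Φ}⁻¹ θ_Φ*. If these hold, the operators in (i) and (ii) are unique and given by R_{A,B} = S_{A,Ψ}⁻¹ θ_Ψ* θ_B and R_{Ψ,Φ} = (S_{A,Ψ}⁻¹)* θ_A*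 θ_Φ. Moreover, if ((Aₙ),(Ψₙ)) is Parseval, then ((Bₙ),(Φₙ)) is Parseval if and only if R_{Ψ,Φ}* R_{A,B} = I_H, if and only if R_{A,B} R_{Ψ,Φ}* = I_H. -/
noncomputable section

open ContinuousLinearMap Filter

variable {H H₀ : Type*} [NormedAddCommGroup H] [InnerProductSpace ℂ H] [CompleteSpace H]
  [NormedAddCommGroup H₀] [InnerProductSpace ℂ H₀] [CompleteSpace H₀]

section Aux

/-- Evaluation at a coordinate, as a continuous linear map on `ℓ²`. -/
private def evCLM (n : ℕ) : l2 ℕ H₀ →L[ℂ] H₀ :=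
  LinearMap.mkContinuous
    { toFun := fun f => f n
      map_add' := fun f g => congrFun (lp.coeFn_add f g) n
      map_smul' := fun c f => congrFun (lp.coeFn_smul c f) n }
    1
    (fun f => by simpa using lp.norm_apply_le_norm (by norm_num) f n)

private lemma evCLM_apply (n : ℕ) (f : l2 ℕ H₀) : evCLM n f = f n := rfl

private lemma evCLM_Lop (n k : ℕ) (x : H₀) :
    evCLM n (Lop k x) = if n = k then x else 0 := by
  by_cases h : n = k
  · subst h
    simp [evCLM_apply, Lop, LinearMap.mkContinuous_apply, lp.single_apply_self]
  · simp only [if_neg h]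
    have : (Lop k x : l2 ℕ H₀) = lp.single 2 k x := rfl
    rw [evCLM_apply, this, lp.single_apply_ne _ _ _ h]

/-- Coordinates of the analysis operator. -/
private lemma coord_eq {A : ℕ → H →L[ℂ] H₀} {θ : H →L[ℂ] l2 ℕ H₀}
    (hθ : ∀ h : H, SeqSum (fun n => Lop n (A n h)) (θ h)) (n : ℕ) (h : H) :
    (θ h) n = A n h := by
  have h1 : Tendsto (fun m => evCLM n (∑ k ∈ Finset.range m, Lop k (A k h)))
      atTop (nhds (evCLM n (θ h))) := ((evCLM n).continuous.tendsto _).comp (hθ h)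
  have h2 : ∀ m, n < m →
      evCLM n (∑ k ∈ Finset.range m, Lop k (A k h)) = A n h := by
    intro m hm
    rw [map_sum]
    simp only [evCLM_Lop]
    rw [Finset.sum_ite_eq, if_pos (Finset.mem_range.2 hm)]
  have h3 : Tendsto (fun m => evCLM n (∑ k ∈ Finset.range m, Lop k (A k h)))
      atTop (nhds (A n h)) := by
    refine tendsto_const_nhds.congr' ?_
    filter_upwards [eventually_gt_atTop n] with m hm
    exact (h2 m hm).symm
  exact (tendsto_nhds_unique h1 h3).symm.trans (evCLM_apply n (θ h)).symm |>.symm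

/-- The factorization `θΨ* ∘ θA = S`. -/
private lemma adj_theta_comp {A Ψ : ℕ → H →L[ℂ] H₀} {S : H →L[ℂ] H}
    (hS : ∀ h : H, SeqSum (fun n => adjoint (Ψ n) (A n h)) (S h))
    {θA θΨ : H →L[ℂ] l2 ℕ H₀}
    (hθA : ∀ h : H, SeqSum (fun n => Lop n (A n h)) (θA h))
    (hθΨ : ∀ h : H, SeqSum (fun n => Lop n (Ψ n h)) (θΨ h)) :
    adjoint θΨ ∘L θA = S := by
  refine ContinuousLinearMap.ext fun h => ?_
  rw [comp_apply]
  refine ext_inner_left ℂ fun v => ?_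
  rw [adjoint_inner_right]
  have h1 : Tendsto
      (fun m => (inner ℂ (∑ k ∈ Finset.range m, Lop k (Ψ k v) : l2 ℕ H₀) (θA h) : ℂ))
      atTop (nhds (inner ℂ (θΨ v) (θA h))) := (hθΨ v).inner tendsto_const_nhds
  have h2 : Tendsto
      (fun m => (inner ℂ v (∑ k ∈ Finset.range m, adjoint (Ψ k) (A k h)) : ℂ))
      atTop (nhds (inner ℂ v (S h))) := tendsto_const_nhds.inner (hS h)
  have h3 : ∀ m, (inner ℂ (∑ k ∈ Finset.range m, Lop k (Ψ k v) : l2 ℕ H₀) (θA h) : ℂ)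
      = inner ℂ v (∑ k ∈ Finset.range m, adjoint (Ψ k) (A k h)) := by
    intro m
    rw [sum_inner, inner_sum]
    refine Finset.sum_congr rfl fun k _ => ?_
    have hLk : (Lop k (Ψ k v) : l2 ℕ H₀) = lp.single 2 k (Ψ k v) := rfl
    rw [hLk, lp.inner_single_left, coord_eq hθA, adjoint_inner_right]
  rw [funext h3] at h1
  exact tendsto_nhds_unique h1 h2

/-- From operator-wise similarity to analysis-operator similarity. -/
private lemma theta_of_ops {A B : ℕ → H →L[ℂ] H₀} {θA θB : H →L[ℂ] l2 ℕ H₀}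
    {R : H →L[ℂ] H}
    (hθA : ∀ h : H, SeqSum (fun n => Lop n (A n h)) (θA h))
    (hθB : ∀ h : H, SeqSum (fun n => Lop n (B n h)) (θB h))
    (hAB : ∀ n, B n = A n ∘L R) : θB = θA ∘L R := by
  refine ContinuousLinearMap.ext fun h => ?_
  refine tendsto_nhds_unique (hθB h) ?_
  have := hθA (R h)
  rw [comp_apply]
  refine this.congr fun m => ?_
  refine Finset.sum_congr rfl fun k _ => ?_
  simp [hAB k]

/-- From analysis-operator similarity to operator-wise similarity. -/
private lemma ops_of_theta {A B : ℕ → H →L[ℂ] H₀} {θA θB : H →L[ℂ] l2 ℕ H₀}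
    {R : H →L[ℂ] H}
    (hθA : ∀ h : H, SeqSum (fun n => Lop n (A n h)) (θA h))
    (hθB : ∀ h : H, SeqSum (fun n => Lop n (B n h)) (θB h))
    (hθ : θB = θA ∘L R) : ∀ n, B n = A n ∘L R := by
  intro n
  refine ContinuousLinearMap.ext fun h => ?_
  have h1 := coord_eq hθB n h
  have h2 := coord_eq hθA n (R h)
  rw [hθ, comp_apply] at h1
  rw [comp_apply, ← h2, h1]

/-- Core algebraic argument for (iii) → (ii). -/
private lemma key_alg {θA θΨ θB θΦ : H →L[ℂ] l2 ℕ H₀} {T TB : H →L[ℂ] H}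
    (hTS : ∀ h, T (adjoint θΨ (θA h)) = h)
    (hTB : ∀ h, TB (adjoint θΦ (θB h)) = h)
    (hP : ∀ x, θB (TB (adjoint θΦ x)) = θA (T (adjoint θΨ x))) :
    (∀ h, θB h = θA (T (adjoint θΨ (θB h)))) ∧
    (∀ h, T (adjoint θΨ (θB (TB (adjoint θΦ (θA h))))) = h) ∧
    (∀ h, TB (adjoint θΦ (θA (T (adjoint θΨ (θB h))))) = h) := by
  have k1 : ∀ h, θB h = θA (T (adjoint θΨ (θB h))) := fun h => by
    rw [← hP (θB h), hTB h]
  refine ⟨k1, fun h => ?_, fun h => ?_⟩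
  · rw [hP (θA h), hTS h, hTS h]
  · rw [← k1 h, hTB h]

end Aux

set_option maxHeartbeats 1600000 in
/-- Characterization of similarity of factorable weak OVFs: (i) ↔ (ii) ↔ (iii),
uniqueness and formulas for the similarity operators, and the Parseval criterion. -/
theorem stmt14
    (A Ψ : ℕ → H →L[ℂ] H₀) (S T : H →L[ℂ] H)
    (hS : ∀ h : H, SeqSum (fun n => adjoint (Ψ n) (A n h)) (S h))
    (hST : S ∘L T = 1) (hTS : T ∘L S = 1)
    (θA θΨ : H →L[ℂ] l2 ℕ H₀)
    (hθA : ∀ h : H, SeqSum (fun n => Lop n (A n h)) (θA h))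
    (hθΨ : ∀ h : H, SeqSum (fun n => Lop n (Ψ n h)) (θΨ h))
    (B Φ : ℕ → H →L[ℂ] H₀) (SB TB : H →L[ℂ] H)
    (hSB : ∀ h : H, SeqSum (fun n => adjoint (Φ n) (B n h)) (SB h))
    (hSBTB : SB ∘L TB = 1) (hTBSB : TB ∘L SB = 1)
    (θB θΦ : H →L[ℂ] l2 ℕ H₀)
    (hθB : ∀ h : H, SeqSum (fun n => Lop n (B n h)) (θB h))
    (hθΦ : ∀ h : H, SeqSum (fun n => Lop n (Φ n h)) (θΦ h)) :
    -- (i) ↔ (ii)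
    ((∃ R R' : H →L[ℂ] H, IsUnit R ∧ IsUnit R' ∧
        (∀ n : ℕ, B n = A n ∘L R) ∧ (∀ n : ℕ, Φ n = Ψ n ∘L R')) ↔
      (∃ R R' : H →L[ℂ] H, IsUnit R ∧ IsUnit R' ∧
        θB = θA ∘L R ∧ θΦ = θΨ ∘L R')) ∧
    -- (ii) ↔ (iii)
    ((∃ R R' : H →L[ℂ] H, IsUnit R ∧ IsUnit R' ∧
        θB = θA ∘L R ∧ θΦ = θΨ ∘L R') ↔
      θB ∘L TB ∘L adjoint θΦ = θA ∘L T ∘L adjoint θΨ) ∧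
    -- uniqueness: the operators in (i) and (ii) are given by the stated formulas
    (∀ R R' : H →L[ℂ] H, IsUnit R → IsUnit R' →
      ((((∀ n : ℕ, B n = A n ∘L R) ∧ (∀ n : ℕ, Φ n = Ψ n ∘L R')) ∨
        (θB = θA ∘L R ∧ θΦ = θΨ ∘L R')) →
        R = T ∘L (adjoint θΨ ∘L θB) ∧ R' = adjoint T ∘L (adjoint θA ∘L θΦ))) ∧
    -- the Parseval criterion
    (S = 1 → ∀ R R' : H →L[ℂ] H, IsUnit R → IsUnit R' →
      (∀ n : ℕ, B n = A n ∘L R) → (∀ n : ℕ, Φ n = Ψ n ∘L R') →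
      ((SB = 1 ↔ adjoint R' ∘L R = 1) ∧ (SB = 1 ↔ R ∘L adjoint R' = 1))) := by
  classical
  -- factorizations of the frame operators through the analysis operators
  have hSA : adjoint θΨ ∘L θA = S := adj_theta_comp hS hθA hθΨ
  have hSBc : adjoint θΦ ∘L θB = SB := adj_theta_comp hSB hθB hθΦ
  -- pointwise versions
  have pS : ∀ x, adjoint θΨ (θA x) = S x := fun x => by
    simpa using DFunLike.congr_fun hSA x
  have pSB : ∀ x, adjoint θΦ (θB x) = SB x := fun x => by
    simpa using DFunLike.congr_fun hSBc x
  have pST : ∀ x, S (T x) = x := fun x => by simpa using DFunLike.congr_fun hST x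
  have pTS : ∀ x, T (S x) = x := fun x => by simpa using DFunLike.congr_fun hTS x
  have pSBTB : ∀ x, SB (TB x) = x := fun x => by simpa using DFunLike.congr_fun hSBTB x
  have pTBSB : ∀ x, TB (SB x) = x := fun x => by simpa using DFunLike.congr_fun hTBSB x
  -- adjoint pointwise versions
  have hadj1 : (1 : H →L[ℂ] H) = adjoint (1 : H →L[ℂ] H) := by
    rw [one_def, adjoint_id]
  have pSadj : ∀ x, adjoint θA (θΨ x) = adjoint S x := fun x => by
    have h := congrArg adjoint hSA
    rw [adjoint_comp, adjoint_adjoint] at h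
    simpa using DFunLike.congr_fun h x
  have pSBadj : ∀ x, adjoint θB (θΦ x) = adjoint SB x := fun x => by
    have h := congrArg adjoint hSBc
    rw [adjoint_comp, adjoint_adjoint] at h
    simpa using DFunLike.congr_fun h x
  have pSTadj : ∀ x, adjoint T (adjoint S x) = x := fun x => by
    have h := congrArg adjoint hST
    rw [adjoint_comp, ← hadj1] at h
    simpa using DFunLike.congr_fun h x
  have pSBTBadj : ∀ x, adjoint TB (adjoint SB x) = x := fun x => by
    have h := congrArg adjoint hSBTB
    rw [adjoint_comp, ← hadj1] at h
    simpa using DFunLike.congr_fun h x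
  -- (i) → (ii)
  have i_to_ii : ∀ R R' : H →L[ℂ] H,
      (∀ n, B n = A n ∘L R) → (∀ n, Φ n = Ψ n ∘L R') →
      θB = θA ∘L R ∧ θΦ = θΨ ∘L R' := fun R R' h1 h2 =>
    ⟨theta_of_ops hθA hθB h1, theta_of_ops hθΨ hθΦ h2⟩
  -- (ii) → (iii)
  have ii_to_iii : ∀ R R' : H →L[ℂ] H, IsUnit R → IsUnit R' →
      θB = θA ∘L R → θΦ = θΨ ∘L R' →
      θB ∘L TB ∘L adjoint θΦ = θA ∘L T ∘L adjoint θΨ := by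
    intro R R' hR hR' hBR hΦR'
    obtain ⟨w, hw⟩ := hR'
    have hw1 : R' ∘L (↑w⁻¹ : H →L[ℂ] H) = 1 := by
      rw [← mul_def, ← hw]; exact w.mul_inv
    have hw2 : (↑w⁻¹ : H →L[ℂ] H) ∘L R' = 1 := by
      rw [← mul_def, ← hw]; exact w.inv_mul
    have pw1 : ∀ x, adjoint (↑w⁻¹ : H →L[ℂ] H) (adjoint R' x) = x := fun x => by
      have h := congrArg adjoint hw1
      rw [adjoint_comp, ← hadj1] at h
      simpa using DFunLike.congr_fun h x
    have pB : ∀ x, θB x = θA (R x) := fun x => by rw [hBR]; rfl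
    have padjΦ : ∀ x, adjoint θΦ x = adjoint R' (adjoint θΨ x) := fun x => by
      have h := congrArg adjoint hΦR'
      rw [adjoint_comp] at h
      rw [h]; rfl
    have pSBR : ∀ x, SB x = adjoint R' (S (R x)) := fun x => by
      rw [← pSB x, pB x, padjΦ, pS]
    have step1 : ∀ y, S (R (TB (adjoint R' y))) = y := fun y => by
      have e1 : S (R (TB (adjoint R' y))) =
          adjoint (↑w⁻¹ : H →L[ℂ] H) (SB (TB (adjoint R' y))) := by
        rw [pSBR, pw1]
      rw [e1, pSBTB, pw1]
    have step2 : ∀ y, R (TB (adjoint R' y)) = T y := fun y => by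
      have h := congrArg T (step1 y)
      rw [pTS] at h
      exact h
    refine ContinuousLinearMap.ext fun x => ?_
    simp only [comp_apply]
    rw [pB, padjΦ, step2]
  -- (iii) → (ii)
  have iii_to_ii : θB ∘L TB ∘L adjoint θΦ = θA ∘L T ∘L adjoint θΨ →
      ∃ R R' : H →L[ℂ] H, IsUnit R ∧ IsUnit R' ∧
        θB = θA ∘L R ∧ θΦ = θΨ ∘L R' := by
    intro hP
    have pP : ∀ x, θB (TB (adjoint θΦ x)) = θA (T (adjoint θΨ x)) := fun x => by
      simpa using DFunLike.congr_fun hP x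
    have hTS1 : ∀ h, T (adjoint θΨ (θA h)) = h := fun h => by rw [pS, pTS]
    have hTB1 : ∀ h, TB (adjoint θΦ (θB h)) = h := fun h => by rw [pSB, pTBSB]
    obtain ⟨k1, k2, k3⟩ := key_alg hTS1 hTB1 pP
    have pPadj : ∀ x, θΦ (adjoint TB (adjoint θB x))
        = θΨ (adjoint T (adjoint θA x)) := fun x => by
      have h := congrArg adjoint hP
      simp only [adjoint_comp, adjoint_adjoint] at h
      simpa using DFunLike.congr_fun h x
    have hTS2 : ∀ h, adjoint T (adjoint θA (θΨ h)) = h := fun h => by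
      rw [pSadj, pSTadj]
    have hTB2 : ∀ h, adjoint TB (adjoint θB (θΦ h)) = h := fun h => by
      rw [pSBadj, pSBTBadj]
    obtain ⟨m1, m2, m3⟩ := key_alg hTS2 hTB2 pPadj
    refine ⟨T ∘L (adjoint θΨ ∘L θB), adjoint T ∘L (adjoint θA ∘L θΦ), ?_, ?_, ?_, ?_⟩
    · refine ⟨⟨T ∘L (adjoint θΨ ∘L θB), TB ∘L (adjoint θΦ ∘L θA), ?_, ?_⟩, rfl⟩
      · refine ContinuousLinearMap.ext fun x => ?_
        simp only [ContinuousLinearMap.mul_apply, comp_apply, one_apply]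
        exact k2 x
      · refine ContinuousLinearMap.ext fun x => ?_
        simp only [ContinuousLinearMap.mul_apply, comp_apply, one_apply]
        exact k3 x
    · refine ⟨⟨adjoint T ∘L (adjoint θA ∘L θΦ), adjoint TB ∘L (adjoint θB ∘L θΨ), ?_, ?_⟩, rfl⟩
      · refine ContinuousLinearMap.ext fun x => ?_
        simp only [ContinuousLinearMap.mul_apply, comp_apply, one_apply]
        exact m2 x
      · refine ContinuousLinearMap.ext fun x => ?_
        simp only [ContinuousLinearMap.mul_apply, comp_apply, one_apply]
        exact m3 x
    · refine ContinuousLinearMap.ext fun h => ?_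
      simp only [comp_apply]
      exact k1 h
    · refine ContinuousLinearMap.ext fun h => ?_
      simp only [comp_apply]
      exact m1 h
  -- uniqueness
  have uniq : ∀ R R' : H →L[ℂ] H,
      θB = θA ∘L R → θΦ = θΨ ∘L R' →
      R = T ∘L (adjoint θΨ ∘L θB) ∧ R' = adjoint T ∘L (adjoint θA ∘L θΦ) := by
    intro R R' hBR hΦR'
    constructor
    · refine ContinuousLinearMap.ext fun h => ?_
      simp only [comp_apply]
      rw [hBR, comp_apply, pS, pTS]
    · refine ContinuousLinearMap.ext fun h => ?_
      simp only [comp_apply]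
      rw [hΦR', comp_apply, pSadj, pSTadj]
  refine ⟨?_, ⟨?_, ?_⟩, ?_, ?_⟩
  · constructor
    · rintro ⟨R, R', hR, hR', h1, h2⟩
      obtain ⟨e1, e2⟩ := i_to_ii R R' h1 h2
      exact ⟨R, R', hR, hR', e1, e2⟩
    · rintro ⟨R, R', hR, hR', h1, h2⟩
      exact ⟨R, R', hR, hR', ops_of_theta hθA hθB h1, ops_of_theta hθΨ hθΦ h2⟩
  · rintro ⟨R, R', hR, hR', h1, h2⟩
    exact ii_to_iii R R' hR hR' h1 h2
  · exact iii_to_ii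
  · intro R R' hR hR' hcase
    rcases hcase with ⟨h1, h2⟩ | ⟨h1, h2⟩
    · obtain ⟨e1, e2⟩ := i_to_ii R R' h1 h2
      exact uniq R R' e1 e2
    · exact uniq R R' h1 h2
  -- Parseval criterion
  · intro hS1 R R' hR hR' h1 h2
    obtain ⟨hBR, hΦR'⟩ := i_to_ii R R' h1 h2
    have hSBR : SB = adjoint R' ∘L R := by
      refine ContinuousLinearMap.ext fun x => ?_
      have e : SB x = adjoint R' (S (R x)) := by
        rw [← pSB x, hBR, hΦR', adjoint_comp]
        simp only [comp_apply]
        rw [pS]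
      rw [comp_apply, e, hS1, ContinuousLinearMap.one_apply]
    obtain ⟨u, hu⟩ := hR
    have hu1 : R ∘L (↑u⁻¹ : H →L[ℂ] H) = 1 := by
      rw [← mul_def, ← hu]; exact u.mul_inv
    have hu2 : (↑u⁻¹ : H →L[ℂ] H) ∘L R = 1 := by
      rw [← mul_def, ← hu]; exact u.inv_mul
    have hiff : (adjoint R' ∘L R = 1) ↔ (R ∘L adjoint R' = 1) := by
      constructor
      · intro h
        have e : adjoint R' = (↑u⁻¹ : H →L[ℂ] H) := by
          calc adjoint R' = adjoint R' ∘L (R ∘L (↑u⁻¹ : H →L[ℂ] H)) := by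
                rw [hu1, one_def, comp_id]
            _ = (adjoint R' ∘L R) ∘L (↑u⁻¹ : H →L[ℂ] H) := by rw [comp_assoc]
            _ = (↑u⁻¹ : H →L[ℂ] H) := by rw [h, one_def, id_comp]
        rw [e]; exact hu1
      · intro h
        have e : adjoint R' = (↑u⁻¹ : H →L[ℂ] H) := by
          calc adjoint R' = ((↑u⁻¹ : H →L[ℂ] H) ∘L R) ∘L adjoint R' := by
                rw [hu2, one_def, id_comp]
            _ = (↑u⁻¹ : H →L[ℂ] H) ∘L (R ∘L adjoint R') := by rw [comp_assoc]
            _ = (↑u⁻¹ : H →L[ℂ] H) := by rw [h, one_def, comp_id]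
        rw [e]; exact hu2
    exact ⟨by rw [hSBR], by rw [hSBR]; exact hiff⟩
end
end
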